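/- Let a, b ∈ ℝ_{++}ⁿ be strictly positive probability vectors, C ∈ ℝ₊^{n×n}, γ > 0, K := exp(−C/γ). Then there exists a dual optimal solution (f*, g*) ∈ ℝⁿ×ℝⁿ (i.e. diag(e^{f*/γ}) K diag(e^{g*/γ}) has row sums a and column sums b) such that max(‖f* − γ log a‖_∞, ‖g* − γ log b‖_∞) ≤ 2‖C‖_∞. -/

import Mathlib

set_option maxHeartbeats 1000000

open Finset

lemma exp_quad_bound (γ c L t : ℝ) (hγ : 0 < γ)
    (h : γ * Real.exp ((t - c)/γ) ≤ t - L) : t ≤ c + max (4*γ) (c - L) := by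
  by_contra hcon
  push_neg at hcon
  set x := (t - c)/γ with hx
  have hxval : t = c + γ * x := by rw [hx, mul_div_assoc', mul_div_cancel_left₀ _ hγ.ne']; ring
  have h1 : 4*γ < γ * x := lt_of_le_of_lt (le_max_left _ _) (by linarith)
  have h2 : c - L < γ * x := lt_of_le_of_lt (le_max_right _ _) (by linarith)
  have hx4 : 4 < x := by
    have := (mul_lt_mul_iff_right₀ hγ).mp (by linarith : γ * 4 < γ * x)
    linarith
  have hexp : (1 + x/2)^2 ≤ Real.exp x := by
    have h5 : 1 + x/2 ≤ Real.exp (x/2) := by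
      have := Real.add_one_le_exp (x/2); linarith
    have h6 : (1 + x/2)^2 ≤ (Real.exp (x/2))^2 := by
      apply sq_le_sq' <;> nlinarith
    calc (1 + x/2)^2 ≤ (Real.exp (x/2))^2 := h6
      _ = Real.exp x := by rw [sq, ← Real.exp_add]; ring_nf
  have hkey : γ * (1 + x/2)^2 ≤ c + γ * x - L := by
    have := mul_le_mul_of_nonneg_left hexp (le_of_lt hγ)
    nlinarith [h]
  nlinarith [hγ, hx4, h2]

lemma sinkhorn_exists {n : ℕ} (hn : 0 < n) (a b : Fin n → ℝ)
    (C : Matrix (Fin n) (Fin n) ℝ) (γ : ℝ) (hγ : 0 < γ)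
    (ha0 : ∀ i, 0 < a i) (hb0 : ∀ j, 0 < b j)
    (ha1 : ∑ i, a i = 1) (hb1 : ∑ j, b j = 1) :
    ∃ f g : Fin n → ℝ,
      (∀ i, ∑ j, Real.exp ((f i + (g j - C i j))/γ) = a i) ∧
      (∀ j, ∑ i, Real.exp ((f i + (g j - C i j))/γ) = b j) := by
  haveI : Nonempty (Fin n) := Fin.pos_iff_nonempty.mp hn
  have hune : (Finset.univ : Finset (Fin n)).Nonempty := univ_nonempty
  set i0 : Fin n := ⟨0, hn⟩ with hi0
  set H : (Fin n → ℝ) × (Fin n → ℝ) → ℝ := fun p =>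
    (∑ i, p.1 i * a i) + (∑ j, p.2 j * b j)
      - γ * ∑ i, ∑ j, Real.exp ((p.1 i + (p.2 j - C i j))/γ) with hH
  have hHcont : Continuous H := by fun_prop
  -- shift invariance
  have hshift : ∀ f g η : _, H (fun i => f i - η, fun j => g j + η) = H (f, g) := by
    intro f g η
    simp only [hH]
    have e1 : ∀ i j : Fin n, ((f i - η) + ((g j + η) - C i j))/γ
        = (f i + (g j - C i j))/γ := by intro i j; ring_nf
    have e2 : ∑ i, (f i - η) * a i = (∑ i, f i * a i) - η := by
      simp [sub_mul, Finset.sum_sub_distrib, ← Finset.mul_sum, ha1]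
    have e3 : ∑ j, (g j + η) * b j = (∑ j, g j * b j) + η := by
      simp [add_mul, Finset.sum_add_distrib, ← Finset.mul_sum, hb1]
    simp only [e1, e2, e3]
    ring
  -- the sublevel/slice set
  set K : Set ((Fin n → ℝ) × (Fin n → ℝ)) :=
    {p | p.1 i0 = 0 ∧ H (0, 0) ≤ H p} with hKdef
  have hK0 : ((0, 0) : (Fin n → ℝ) × (Fin n → ℝ)) ∈ K := ⟨rfl, le_refl _⟩
  have hKclosed : IsClosed K := by
    have : K = {p : (Fin n → ℝ) × (Fin n → ℝ) | p.1 i0 = 0} ∩ {p | H (0,0) ≤ H p} := rfl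
    rw [this]
    exact (isClosed_eq (by fun_prop) continuous_const).inter
      (isClosed_le continuous_const hHcont)
  have hbdd : ∃ R, ∀ p ∈ K, ‖p‖ ≤ R := by
    set c : ℝ := Finset.univ.sup' hune fun i => Finset.univ.sup' hune fun j => C i j with hc
    have hcC : ∀ i j, C i j ≤ c := by
      intro i j
      exact le_trans (Finset.le_sup' _ (mem_univ j))
        (Finset.le_sup' (fun i => Finset.univ.sup' hune fun j => C i j) (mem_univ i))
    set amin : ℝ := Finset.univ.inf' hune a with hamin'
    have hamin : 0 < amin := (Finset.lt_inf'_iff hune).mpr fun i _ => ha0 i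
    have haminle : ∀ k, amin ≤ a k := fun k => Finset.inf'_le _ (mem_univ k)
    set bmin : ℝ := Finset.univ.inf' hune b with hbmin'
    have hbmin : 0 < bmin := (Finset.lt_inf'_iff hune).mpr fun j _ => hb0 j
    have hbminle : ∀ k, bmin ≤ b k := fun k => Finset.inf'_le _ (mem_univ k)
    set L : ℝ := H (0, 0) with hL
    set T : ℝ := c + max (4*γ) (c - L) with hT
    set Da : ℝ := (T - L)/amin with hDa
    set Db : ℝ := (T - L)/bmin with hDb
    refine ⟨|L| + |T| + |Da| + |Db|, ?_⟩
    rintro p ⟨hp0, hpL'⟩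
    have hpL : L ≤ H p := hpL'
    set f : Fin n → ℝ := p.1 with hf
    set g : Fin n → ℝ := p.2 with hg
    set M : ℝ := Finset.univ.sup' hune f with hM
    set N : ℝ := Finset.univ.sup' hune g with hN
    have hfM : ∀ k, f k ≤ M := fun k => Finset.le_sup' f (mem_univ k)
    have hgN : ∀ k, g k ≤ N := fun k => Finset.le_sup' g (mem_univ k)
    have hM0 : 0 ≤ M := hp0 ▸ hfM i0
    obtain ⟨im, -, him⟩ := Finset.exists_mem_eq_sup' hune f
    obtain ⟨jm, -, hjm⟩ := Finset.exists_mem_eq_sup' hune g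
    set Eterm : ℝ := γ * ∑ i, ∑ j, Real.exp ((f i + (g j - C i j))/γ) with hEt
    have hHp : H p = (∑ i, f i * a i) + (∑ j, g j * b j) - Eterm := rfl
    rw [← hM] at him
    rw [← hN] at hjm
    have hpL2 : L ≤ (∑ i, f i * a i) + (∑ j, g j * b j) - Eterm := by
      rw [← hHp]; exact hpL
    clear_value Eterm N M g f Db Da T L bmin amin c
    have hE0 : 0 ≤ Eterm := by
      rw [hEt]
      exact mul_nonneg hγ.le (Finset.sum_nonneg fun i _ =>
        Finset.sum_nonneg fun j _ => (Real.exp_pos _).le)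
    have hLf : ∑ i, f i * a i ≤ M := by
      calc ∑ i, f i * a i ≤ ∑ i, M * a i :=
            Finset.sum_le_sum fun i _ => mul_le_mul_of_nonneg_right (hfM i) (ha0 i).le
        _ = M := by rw [← Finset.mul_sum, ha1, mul_one]
    have hLg : ∑ j, g j * b j ≤ N := by
      calc ∑ j, g j * b j ≤ ∑ j, N * b j :=
            Finset.sum_le_sum fun j _ => mul_le_mul_of_nonneg_right (hgN j) (hb0 j).le
        _ = N := by rw [← Finset.mul_sum, hb1, mul_one]
    have hLfk : ∀ k, ∑ i, f i * a i ≤ M + a k * (f k - M) := by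
      intro k
      have e4 : ∑ i, f i * a i = (∑ i, (f i - M) * a i) + M := by
        simp [sub_mul, Finset.sum_sub_distrib, ← Finset.mul_sum, ha1]
      have e5 : ∑ i, (f i - M) * a i ≤ (f k - M) * a k := by
        rw [← Finset.add_sum_erase _ _ (mem_univ k)]
        have : ∑ i ∈ Finset.univ.erase k, (f i - M) * a i ≤ 0 :=
          Finset.sum_nonpos fun i _ =>
            mul_nonpos_of_nonpos_of_nonneg (by linarith [hfM i]) (ha0 i).le
        linarith
      linarith [e4, e5, mul_comm (a k) (f k - M)]
    have hLgk : ∀ k, ∑ j, g j * b j ≤ N + b k * (g k - N) := by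
      intro k
      have e4 : ∑ j, g j * b j = (∑ j, (g j - N) * b j) + N := by
        simp [sub_mul, Finset.sum_sub_distrib, ← Finset.mul_sum, hb1]
      have e5 : ∑ j, (g j - N) * b j ≤ (g k - N) * b k := by
        rw [← Finset.add_sum_erase _ _ (mem_univ k)]
        have : ∑ j ∈ Finset.univ.erase k, (g j - N) * b j ≤ 0 :=
          Finset.sum_nonpos fun j _ =>
            mul_nonpos_of_nonpos_of_nonneg (by linarith [hgN j]) (hb0 j).le
        linarith
      linarith [e4, e5, mul_comm (b k) (g k - N)]
    have hEge : γ * Real.exp ((M + N - c)/γ) ≤ Eterm := by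
      have t1 : Real.exp ((M + N - c)/γ) ≤ Real.exp ((f im + (g jm - C im jm))/γ) := by
        rw [Real.exp_le_exp]
        apply (div_le_div_iff_of_pos_right hγ).mpr
        have h12 := hcC im jm
        linarith [him ▸ hfM im, hjm ▸ hgN jm, him, hjm,
          le_of_eq him, le_of_eq hjm]
      have t2 : Real.exp ((f im + (g jm - C im jm))/γ)
          ≤ ∑ j, Real.exp ((f im + (g j - C im j))/γ) :=
        Finset.single_le_sum (f := fun j => Real.exp ((f im + (g j - C im j))/γ))
          (fun j _ => (Real.exp_pos _).le) (mem_univ jm)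
      have t3 : ∑ j, Real.exp ((f im + (g j - C im j))/γ)
          ≤ ∑ i, ∑ j, Real.exp ((f i + (g j - C i j))/γ) :=
        Finset.single_le_sum (f := fun i => ∑ j, Real.exp ((f i + (g j - C i j))/γ))
          (fun i _ => Finset.sum_nonneg fun j _ => (Real.exp_pos _).le) (mem_univ im)
      rw [hEt]
      exact mul_le_mul_of_nonneg_left (le_trans t1 (le_trans t2 t3)) hγ.le
    have b2 : L ≤ M + N := by linarith [hLf, hLg, hE0]
    have b1 : γ * Real.exp ((M + N - c)/γ) ≤ (M + N) - L := by
      linarith [hEge, hLf, hLg]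
    have hMNT : M + N ≤ T := by
      rw [hT]; exact exp_quad_bound γ c L (M + N) hγ b1
    have hMfk : ∀ k, M - f k ≤ Da := by
      intro k
      have h6 : a k * (M - f k) ≤ T - L := by
        have h62 := hLfk k
        nlinarith [hLg, hE0, hMNT, hpL2]
      have h7 : amin * (M - f k) ≤ T - L := by
        nlinarith [haminle k, hfM k, hamin]
      rw [hDa, le_div_iff₀ hamin]
      linarith [h7, mul_comm amin (M - f k)]
    have hNgk : ∀ k, N - g k ≤ Db := by
      intro k
      have h6 : b k * (N - g k) ≤ T - L := by
        have h62 := hLgk k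
        nlinarith [hLf, hE0, hMNT, hpL2]
      have h7 : bmin * (N - g k) ≤ T - L := by
        nlinarith [hbminle k, hgN k, hbmin]
      rw [hDb, le_div_iff₀ hbmin]
      linarith [h7, mul_comm bmin (N - g k)]
    have hMU : M ≤ Da := by have := hMfk i0; rw [hp0] at this; linarith
    have hR0 : (0:ℝ) ≤ |L| + |T| + |Da| + |Db| := by positivity
    have hfb : ∀ k, |f k| ≤ |L| + |T| + |Da| + |Db| := by
      intro k
      rw [abs_le]
      constructor
      · have := hMfk k
        have h8 : -|Da| ≤ f k := by linarith [le_abs_self Da, hM0]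
        linarith [abs_nonneg L, abs_nonneg T, abs_nonneg Db]
      · have := hfM k
        linarith [le_abs_self Da, abs_nonneg L, abs_nonneg T, abs_nonneg Db]
    have hgb : ∀ k, |g k| ≤ |L| + |T| + |Da| + |Db| := by
      intro k
      rw [abs_le]
      constructor
      · have h9 := hNgk k
        have h10 : L - M ≤ N := by linarith [b2]
        have : -|L| - |Da| - |Db| ≤ g k := by
          linarith [neg_abs_le L, le_abs_self Da, le_abs_self Db, hMU, hM0]
        linarith [abs_nonneg T]
      · have := hgN k
        have h11 : N ≤ T := by linarith [hMNT, hM0]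
        linarith [le_abs_self T, abs_nonneg L, abs_nonneg Da, abs_nonneg Db]
    rw [Prod.norm_def]
    apply max_le
    · rw [pi_norm_le_iff_of_nonneg hR0]
      intro k; rw [Real.norm_eq_abs, ← hf]; exact hfb k
    · rw [pi_norm_le_iff_of_nonneg hR0]
      intro k; rw [Real.norm_eq_abs, ← hg]; exact hgb k
  have hKcomp : IsCompact K := by
    obtain ⟨R, hR⟩ := hbdd
    exact Metric.isCompact_of_isClosed_isBounded hKclosed
      (isBounded_iff_forall_norm_le.mpr ⟨R, hR⟩)
  obtain ⟨p, hpK, hpmax⟩ := hKcomp.exists_isMaxOn ⟨(0,0), hK0⟩ hHcont.continuousOn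
  have hglobal : ∀ q, H q ≤ H p := by
    intro q
    set η := q.1 i0 with hη
    set s : (Fin n → ℝ) × (Fin n → ℝ) := (fun i => q.1 i - η, fun j => q.2 j + η) with hs
    have hsq : H s = H q := by
      have := hshift q.1 q.2 η
      simpa [hs] using this
    by_cases hc : H (0,0) ≤ H s
    · have hsK : s ∈ K := ⟨by simp [hs, hη], hc⟩
      calc H q = H s := hsq.symm
        _ ≤ H p := hpmax hsK
    · push_neg at hc
      have := hpK.2
      linarith [hsq ▸ hc]
  refine ⟨p.1, p.2, ?_, ?_⟩
  · -- row sums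
    intro i
    set f : Fin n → ℝ := p.1 with hf
    set g : Fin n → ℝ := p.2 with hg
    set ψ : ℝ → ℝ := fun t => t * a i - γ * ∑ j, Real.exp ((t + (g j - C i j))/γ) with hψ
    set Rest : ℝ := (∑ k ∈ Finset.univ.erase i, f k * a k) + (∑ j, g j * b j)
      - γ * ∑ k ∈ Finset.univ.erase i, ∑ j, Real.exp ((f k + (g j - C k j))/γ) with hRest
    have hdecomp : ∀ t, H (Function.update f i t, g) = ψ t + Rest := by
      intro t
      have e1 : ∑ k, (Function.update f i t) k * a k
          = t * a i + ∑ k ∈ Finset.univ.erase i, f k * a k := by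
        rw [← Finset.add_sum_erase _ (fun k => (Function.update f i t) k * a k)
          (mem_univ i), Function.update_self]
        congr 1
        exact Finset.sum_congr rfl fun k hk => by
          rw [Function.update_of_ne (Finset.ne_of_mem_erase hk)]
      have e2 : ∑ k, ∑ j, Real.exp (((Function.update f i t) k + (g j - C k j))/γ)
          = (∑ j, Real.exp ((t + (g j - C i j))/γ))
            + ∑ k ∈ Finset.univ.erase i, ∑ j, Real.exp ((f k + (g j - C k j))/γ) := by
        rw [← Finset.add_sum_erase _
          (fun k => ∑ j, Real.exp (((Function.update f i t) k + (g j - C k j))/γ))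
          (mem_univ i)]
        congr 1
        · simp only [Function.update_self]
        · exact Finset.sum_congr rfl fun k hk => Finset.sum_congr rfl fun j _ => by
            rw [Function.update_of_ne (Finset.ne_of_mem_erase hk)]
      show (∑ k, (Function.update f i t) k * a k) + (∑ j, g j * b j)
          - γ * (∑ k, ∑ j, Real.exp (((Function.update f i t) k + (g j - C k j))/γ))
          = ψ t + Rest
      rw [e1, e2, hψ, hRest]; ring
    have hmax : ∀ t, ψ t ≤ ψ (f i) := by
      intro t
      have h1 := hglobal (Function.update f i t, g)
      have h2 : H (f, g) = ψ (f i) + Rest := by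
        have := hdecomp (f i); rwa [Function.update_eq_self] at this
      have h3 : H p = H (f, g) := rfl
      rw [hdecomp t, h3, h2] at h1
      linarith
    have hd : HasDerivAt ψ
        (a i - γ * ∑ j, Real.exp ((f i + (g j - C i j))/γ) * (1/γ)) (f i) := by
      have hA : HasDerivAt (fun t : ℝ => t * a i) (a i) (f i) := by
        simpa using (hasDerivAt_id (f i)).mul_const (a i)
      have hB : HasDerivAt (fun t => ∑ j, Real.exp ((t + (g j - C i j))/γ))
          (∑ j, Real.exp ((f i + (g j - C i j))/γ) * (1/γ)) (f i) :=
        HasDerivAt.fun_sum fun j _ => by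
          have h0 : HasDerivAt (fun t : ℝ => (t + (g j - C i j))/γ) (1/γ) (f i) := by
            simpa using ((hasDerivAt_id (f i)).add_const (g j - C i j)).div_const γ
          simpa using h0.exp
      exact hA.sub (hB.const_mul γ)
    have hloc : IsLocalMax ψ (f i) := Filter.Eventually.of_forall hmax
    have hz := hloc.hasDerivAt_eq_zero hd
    have h4 : ∑ j, Real.exp ((f i + (g j - C i j))/γ) * (1/γ)
        = (∑ j, Real.exp ((f i + (g j - C i j))/γ)) * (1/γ) := by
      rw [Finset.sum_mul]
    rw [h4] at hz
    field_simp at hz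
    linarith [hz]
  · -- column sums
    intro j
    set f : Fin n → ℝ := p.1 with hf
    set g : Fin n → ℝ := p.2 with hg
    set ψ : ℝ → ℝ := fun t => t * b j - γ * ∑ i, Real.exp ((f i + (t - C i j))/γ) with hψ
    set Rest : ℝ := (∑ i, f i * a i) + (∑ l ∈ Finset.univ.erase j, g l * b l)
      - γ * ∑ l ∈ Finset.univ.erase j, ∑ i, Real.exp ((f i + (g l - C i l))/γ) with hRest
    have hdecomp : ∀ t, H (f, Function.update g j t) = ψ t + Rest := by
      intro t
      have e1 : ∑ l, (Function.update g j t) l * b l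
          = t * b j + ∑ l ∈ Finset.univ.erase j, g l * b l := by
        rw [← Finset.add_sum_erase _ (fun l => (Function.update g j t) l * b l)
          (mem_univ j), Function.update_self]
        congr 1
        exact Finset.sum_congr rfl fun l hl => by
          rw [Function.update_of_ne (Finset.ne_of_mem_erase hl)]
      have e2 : ∑ k, ∑ l, Real.exp ((f k + ((Function.update g j t) l - C k l))/γ)
          = (∑ i, Real.exp ((f i + (t - C i j))/γ))
            + ∑ l ∈ Finset.univ.erase j, ∑ i, Real.exp ((f i + (g l - C i l))/γ) := by
        rw [Finset.sum_comm]
        rw [← Finset.add_sum_erase _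
          (fun l => ∑ k, Real.exp ((f k + ((Function.update g j t) l - C k l))/γ))
          (mem_univ j)]
        congr 1
        · simp only [Function.update_self]
        · exact Finset.sum_congr rfl fun l hl => Finset.sum_congr rfl fun k _ => by
            rw [Function.update_of_ne (Finset.ne_of_mem_erase hl)]
      show (∑ k, f k * a k) + (∑ l, (Function.update g j t) l * b l)
          - γ * (∑ k, ∑ l, Real.exp ((f k + ((Function.update g j t) l - C k l))/γ))
          = ψ t + Rest
      rw [e1, e2, hψ, hRest]; ring
    have hmax : ∀ t, ψ t ≤ ψ (g j) := by
      intro t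
      have h1 := hglobal (f, Function.update g j t)
      have h2 : H (f, g) = ψ (g j) + Rest := by
        have := hdecomp (g j); rwa [Function.update_eq_self] at this
      have h3 : H p = H (f, g) := rfl
      rw [hdecomp t, h3, h2] at h1
      linarith
    have hd : HasDerivAt ψ
        (b j - γ * ∑ i, Real.exp ((f i + (g j - C i j))/γ) * (1/γ)) (g j) := by
      have hA : HasDerivAt (fun t : ℝ => t * b j) (b j) (g j) := by
        simpa using (hasDerivAt_id (g j)).mul_const (b j)
      have hB : HasDerivAt (fun t => ∑ i, Real.exp ((f i + (t - C i j))/γ))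
          (∑ i, Real.exp ((f i + (g j - C i j))/γ) * (1/γ)) (g j) :=
        HasDerivAt.fun_sum fun i _ => by
          have h0 : HasDerivAt (fun t : ℝ => (f i + (t - C i j))/γ) (1/γ) (g j) := by
            simpa using (((hasDerivAt_id (g j)).sub_const (C i j)).const_add (f i)).div_const γ
          simpa using h0.exp
      exact hA.sub (hB.const_mul γ)
    have hloc : IsLocalMax ψ (g j) := Filter.Eventually.of_forall hmax
    have hz := hloc.hasDerivAt_eq_zero hd
    have h4 : ∑ i, Real.exp ((f i + (g j - C i j))/γ) * (1/γ)
        = (∑ i, Real.exp ((f i + (g j - C i j))/γ)) * (1/γ) := by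
      rw [Finset.sum_mul]
    rw [h4] at hz
    field_simp at hz
    linarith [hz]

/-- The transport plan `P = diag(e^{f/γ}) K diag(e^{g/γ})` with `K = exp(−C/γ)`. -/
noncomputable def plan {n : ℕ} (C : Matrix (Fin n) (Fin n) ℝ) (γ : ℝ)
    (f g : Fin n → ℝ) : Matrix (Fin n) (Fin n) ℝ :=
  fun i j => Real.exp (f i / γ) * Real.exp (-C i j / γ) * Real.exp (g j / γ)

/-- **Bounded dual optimal solution** (Lemma 8 of the paper): there exists a dual
optimal solution `(f*, g*)` of the entropic OT dual (i.e. a pair whose plan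
`diag(e^{f*/γ}) K diag(e^{g*/γ})` has row sums `a` and column sums `b`) with
`max(‖f* − γ log a‖_∞, ‖g* − γ log b‖_∞) ≤ 2‖C‖_∞`. -/
theorem exists_bounded_dual_optimal {n : ℕ} (a b : Fin n → ℝ)
    (C : Matrix (Fin n) (Fin n) ℝ) (γ : ℝ) (hγ : 0 < γ)
    (ha0 : ∀ i, 0 < a i) (hb0 : ∀ j, 0 < b j)
    (ha1 : ∑ i, a i = 1) (hb1 : ∑ j, b j = 1)
    (hC : ∀ i j, 0 ≤ C i j) :
    ∃ fs gs : Fin n → ℝ,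
      (∀ i, ∑ j, plan C γ fs gs i j = a i) ∧
      (∀ j, ∑ i, plan C γ fs gs i j = b j) ∧
      max (⨆ i, |fs i - γ * Real.log (a i)|) (⨆ j, |gs j - γ * Real.log (b j)|) ≤
        2 * ⨆ i, ⨆ j, |C i j| := by
  rcases Nat.eq_zero_or_pos n with hn | hn
  · subst hn
    refine ⟨0, 0, fun i => i.elim0, fun j => j.elim0, ?_⟩
    haveI : IsEmpty (Fin 0) := inferInstance
    simp [Real.iSup_of_isEmpty]
  haveI : Nonempty (Fin n) := Fin.pos_iff_nonempty.mp hn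
  have hγ' : γ ≠ 0 := ne_of_gt hγ
  obtain ⟨f, g, hrow, hcol⟩ := sinkhorn_exists hn a b C γ hγ ha0 hb0 ha1 hb1
  set c : ℝ := ⨆ i, ⨆ j, |C i j| with hc
  have hcC : ∀ i j, C i j ≤ c := by
    intro i j
    calc C i j ≤ |C i j| := le_abs_self _
      _ ≤ ⨆ j, |C i j| := le_ciSup (f := fun j => |C i j|) (Set.Finite.bddAbove (Set.finite_range _)) j
      _ ≤ c := le_ciSup (f := fun i => ⨆ j, |C i j|)
          (Set.Finite.bddAbove (Set.finite_range _)) i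
  have hc0 : 0 ≤ c := by
    obtain ⟨i⟩ := (inferInstance : Nonempty (Fin n))
    exact le_trans (abs_nonneg (C i i)) (le_trans
      (le_ciSup (f := fun j => |C i j|) (Set.Finite.bddAbove (Set.finite_range _)) i)
      (le_ciSup (f := fun i => ⨆ j, |C i j|) (Set.Finite.bddAbove (Set.finite_range _)) i))
  -- the normalizing shift
  set Sf : ℝ := ∑ i, Real.exp (f i / γ) with hSf
  have hSfpos : 0 < Sf := Finset.sum_pos (fun i _ => Real.exp_pos _) Finset.univ_nonempty
  set S : ℝ := γ * Real.log Sf with hS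
  set fs : Fin n → ℝ := fun i => f i - S with hfs
  set gs : Fin n → ℝ := fun j => g j + S with hgs
  have hplan : ∀ i j, plan C γ fs gs i j = Real.exp ((f i + (g j - C i j))/γ) := by
    intro i j
    simp only [plan, hfs, hgs, ← Real.exp_add]
    congr 1
    field_simp
    ring
  have hrow' : ∀ i, ∑ j, plan C γ fs gs i j = a i := by
    intro i; simp only [hplan]; exact hrow i
  have hcol' : ∀ j, ∑ i, plan C γ fs gs i j = b j := by
    intro j; simp only [hplan]; exact hcol j
  refine ⟨fs, gs, hrow', hcol', ?_⟩
  -- normalization : ∑ exp(fs i / γ) = 1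
  have hfs1 : ∑ i, Real.exp (fs i / γ) = 1 := by
    have : ∀ i, Real.exp (fs i / γ) = Real.exp (f i / γ) / Sf := by
      intro i
      rw [hfs]
      simp only [sub_div, Real.exp_sub]
      congr 1
      rw [hS, mul_comm γ (Real.log Sf), mul_div_assoc, div_self hγ', mul_one,
        Real.exp_log hSfpos]
    rw [Finset.sum_congr rfl fun i _ => this i, ← Finset.sum_div, ← hSf,
      div_self (ne_of_gt hSfpos)]
  -- kernel column sums
  set Rj : Fin n → ℝ := fun j => ∑ i, Real.exp (-C i j / γ) * Real.exp (fs i / γ) with hRj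
  have hRpos : ∀ j, 0 < Rj j :=
    fun j => Finset.sum_pos (fun i _ => mul_pos (Real.exp_pos _) (Real.exp_pos _))
      Finset.univ_nonempty
  have hRub : ∀ j, Rj j ≤ 1 := by
    intro j
    calc Rj j ≤ ∑ i, 1 * Real.exp (fs i / γ) := Finset.sum_le_sum fun i _ => by
          have : (-C i j / γ) ≤ 0 := div_nonpos_of_nonpos_of_nonneg (by linarith [hC i j]) hγ.le
          exact mul_le_mul_of_nonneg_right (by simpa using Real.exp_le_one_iff.mpr this)
            (Real.exp_pos _).le
      _ = 1 := by simp [hfs1]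
  have hRlb : ∀ j, Real.exp (-c / γ) ≤ Rj j := by
    intro j
    calc Real.exp (-c/γ) = ∑ i, Real.exp (-c/γ) * Real.exp (fs i / γ) := by
          rw [← Finset.mul_sum, hfs1, mul_one]
      _ ≤ Rj j := Finset.sum_le_sum fun i _ => by
          apply mul_le_mul_of_nonneg_right _ (Real.exp_pos _).le
          exact Real.exp_le_exp.mpr ((div_le_div_iff_of_pos_right hγ).mpr
            (by linarith [hcC i j]))
  -- column equations: exp(gs j/γ) * Rj j = b j
  have hcolR : ∀ j, Real.exp (gs j / γ) * Rj j = b j := by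
    intro j
    rw [hRj, Finset.mul_sum, ← hcol' j]
    exact Finset.sum_congr rfl fun i _ => by rw [plan]; ring
  have hexpg : ∀ j, Real.exp (gs j / γ) = b j / Rj j := by
    intro j
    rw [eq_div_iff (ne_of_gt (hRpos j))]
    exact hcolR j
  have hgsb : ∀ j, gs j - γ * Real.log (b j) = -(γ * Real.log (Rj j)) := by
    intro j
    have h2 : gs j / γ = Real.log (b j) - Real.log (Rj j) := by
      rw [← Real.log_exp (gs j / γ), hexpg j,
        Real.log_div (ne_of_gt (hb0 j)) (ne_of_gt (hRpos j))]
    field_simp at h2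
    linarith [h2]
  have hlogRlb : ∀ j, -(c/γ) ≤ Real.log (Rj j) := by
    intro j
    have := Real.log_le_log (Real.exp_pos (-c/γ)) (hRlb j)
    rwa [Real.log_exp, neg_div] at this
  have hlogRub : ∀ j, Real.log (Rj j) ≤ 0 :=
    fun j => Real.log_nonpos (hRpos j).le (hRub j)
  have ecγ : γ * (c/γ) = c := by field_simp
  have hgbound : ∀ j, |gs j - γ * Real.log (b j)| ≤ c := by
    intro j
    rw [hgsb j, abs_le]
    constructor
    · nlinarith [hlogRub j, hγ, hc0]
    · nlinarith [hlogRlb j, hγ, ecγ]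
  -- Sg bounds
  set Sg : ℝ := ∑ j, Real.exp (gs j / γ) with hSg
  have hSglb : 1 ≤ Sg := by
    rw [← hb1]
    apply Finset.sum_le_sum
    intro j _
    rw [hexpg j, le_div_iff₀ (hRpos j)]
    nlinarith [hRub j, hb0 j]
  have hSgub : Sg ≤ Real.exp (c/γ) := by
    have key : ∀ j, Real.exp (gs j / γ) ≤ b j * Real.exp (c/γ) := by
      intro j
      rw [hexpg j, div_le_iff₀ (hRpos j)]
      have h5 : Real.exp (c/γ) * Real.exp (-c/γ) = 1 := by
        rw [← Real.exp_add, show c/γ + -c/γ = 0 by ring, Real.exp_zero]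
      have h8 : b j * Real.exp (c/γ) * Real.exp (-c/γ) ≤ b j * Real.exp (c/γ) * Rj j :=
        mul_le_mul_of_nonneg_left (hRlb j) (mul_nonneg (hb0 j).le (Real.exp_pos _).le)
      have h9 : b j * Real.exp (c/γ) * Real.exp (-c/γ) = b j := by
        rw [mul_assoc, h5, mul_one]
      linarith [h8, h9]
    calc Sg ≤ ∑ j, b j * Real.exp (c/γ) := Finset.sum_le_sum fun j _ => key j
      _ = Real.exp (c/γ) := by rw [← Finset.sum_mul, hb1, one_mul]
  -- row kernel sums
  set Qi : Fin n → ℝ := fun i => ∑ j, Real.exp (-C i j / γ) * Real.exp (gs j / γ) with hQi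
  have hQpos : ∀ i, 0 < Qi i :=
    fun i => Finset.sum_pos (fun j _ => mul_pos (Real.exp_pos _) (Real.exp_pos _))
      Finset.univ_nonempty
  have hQub : ∀ i, Qi i ≤ Real.exp (c/γ) := by
    intro i
    calc Qi i ≤ ∑ j, 1 * Real.exp (gs j / γ) := Finset.sum_le_sum fun j _ => by
          have h6 : (-C i j / γ) ≤ 0 :=
            div_nonpos_of_nonpos_of_nonneg (by linarith [hC i j]) hγ.le
          exact mul_le_mul_of_nonneg_right (by simpa using Real.exp_le_one_iff.mpr h6)
            (Real.exp_pos _).le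
      _ = Sg := by simp [hSg]
      _ ≤ Real.exp (c/γ) := hSgub
  have hQlb : ∀ i, Real.exp (-(c/γ)) ≤ Qi i := by
    intro i
    have h7 : Real.exp (-(c/γ)) * 1 ≤ Real.exp (-(c/γ)) * Sg :=
      mul_le_mul_of_nonneg_left hSglb (Real.exp_pos _).le
    calc Real.exp (-(c/γ)) = Real.exp (-(c/γ)) * 1 := by ring
      _ ≤ Real.exp (-(c/γ)) * Sg := h7
      _ = ∑ j, Real.exp (-(c/γ)) * Real.exp (gs j / γ) := by rw [hSg, Finset.mul_sum]
      _ ≤ Qi i := Finset.sum_le_sum fun j _ => by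
          apply mul_le_mul_of_nonneg_right _ (Real.exp_pos _).le
          exact Real.exp_le_exp.mpr (by
            rw [neg_div] at *
            exact neg_le_neg ((div_le_div_iff_of_pos_right hγ).mpr (hcC i j)))
  have hrowQ : ∀ i, Real.exp (fs i / γ) * Qi i = a i := by
    intro i
    rw [hQi, Finset.mul_sum, ← hrow' i]
    exact Finset.sum_congr rfl fun j _ => by rw [plan]; ring
  have hexpf : ∀ i, Real.exp (fs i / γ) = a i / Qi i := by
    intro i
    rw [eq_div_iff (ne_of_gt (hQpos i))]
    exact hrowQ i
  have hfsb : ∀ i, fs i - γ * Real.log (a i) = -(γ * Real.log (Qi i)) := by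
    intro i
    have h2 : fs i / γ = Real.log (a i) - Real.log (Qi i) := by
      rw [← Real.log_exp (fs i / γ), hexpf i,
        Real.log_div (ne_of_gt (ha0 i)) (ne_of_gt (hQpos i))]
    field_simp at h2
    linarith [h2]
  have hlogQlb : ∀ i, -(c/γ) ≤ Real.log (Qi i) := by
    intro i
    have := Real.log_le_log (Real.exp_pos (-(c/γ))) (hQlb i)
    rwa [Real.log_exp] at this
  have hlogQub : ∀ i, Real.log (Qi i) ≤ c/γ := by
    intro i
    have := Real.log_le_log (hQpos i) (hQub i)
    rwa [Real.log_exp] at this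
  have hfbound : ∀ i, |fs i - γ * Real.log (a i)| ≤ c := by
    intro i
    rw [hfsb i, abs_le]
    constructor
    · nlinarith [hlogQub i, hγ, ecγ]
    · nlinarith [hlogQlb i, hγ, ecγ]
  apply max_le
  · exact ciSup_le fun i => by linarith [hfbound i, hc0]
  · exact ciSup_le fun j => by linarith [hgbound j, hc0]
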